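/- Let p be a prime and let m ≥ 1, r be integers with 0 ≤ r ≤ m(p−1) − 1, and set r̃ = m(p−1) − r − 1. Then the orthogonal complement of RM_p(r,m) with respect to the bilinear form ⟨g,h⟩ = Σ_{v ∈ 𝔽_p^m} g(v)h(v), namely {g : 𝔽_p^m → 𝔽_p | ⟨g,h⟩ = 0 for all h ∈ RM_p(r,m)}, equals RM_p(r̃, m). -/

import Mathlib

/-- The Reed–Muller code `RM_p(r,m)`: the space of functions `𝔽_p^m → 𝔽_p`
that are evaluations of polynomials of total degree at most `r`. -/
def reedMullerCode (p m r : ℕ) : Set ((Fin m → ZMod p) → ZMod p) :=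
  {g | ∃ f : MvPolynomial (Fin m) (ZMod p),
    f.totalDegree ≤ r ∧ g = fun v => MvPolynomial.eval v f}

open Finset MvPolynomial

section Aux

variable {p : ℕ} [Fact p.Prime]

/-- Power sum over `ZMod p` for positive exponent. -/
lemma rm_sum_pow (k : ℕ) (hk : 0 < k) :
    ∑ x : ZMod p, x ^ k = if p - 1 ∣ k then -1 else 0 := by
  classical
  have hcard : Fintype.card (ZMod p) = p := ZMod.card p
  let φ : (ZMod p)ˣ ↪ ZMod p := ⟨fun x ↦ x, fun _ _ h => Units.ext h⟩
  have hmap : univ.map φ = univ \ {0} := by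
    ext x
    simp only [mem_map, mem_univ, Function.Embedding.coeFn_mk, true_and, mem_sdiff,
      mem_singleton, φ]
    exact (Iff.rfl : (∃ a : (ZMod p)ˣ, (a : ZMod p) = x) ↔ IsUnit x).trans isUnit_iff_ne_zero
  have h1 : ∑ x ∈ univ \ {(0 : ZMod p)}, x ^ k = ∑ x : (ZMod p)ˣ, ((x : ZMod p)) ^ k := by
    rw [← hmap, Finset.sum_map]; rfl
  have h3 := Finset.sum_sdiff (f := fun x : ZMod p => x ^ k)
    (Finset.subset_univ ({0} : Finset (ZMod p)))
  have h2 : ∑ x ∈ ({(0 : ZMod p)} : Finset (ZMod p)), x ^ k = 0 := by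
    simp [zero_pow hk.ne']
  rw [h2, add_zero, h1] at h3
  have := FiniteField.sum_pow_units (ZMod p) k
  rw [hcard] at this
  rw [← h3, ← this]

lemma rm_S_ne_zero {k : ℕ} (h : (∑ x : ZMod p, x ^ k) ≠ 0) : p - 1 ∣ k ∧ 0 < k := by
  by_contra hc
  apply h
  rcases Nat.eq_zero_or_pos k with rfl | hk
  · simp only [pow_zero, Finset.sum_const, Finset.card_univ, ZMod.card, nsmul_eq_mul, mul_one]
    exact ZMod.natCast_self p
  · rw [rm_sum_pow k hk, if_neg]
    intro hdvd
    exact hc ⟨hdvd, hk⟩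

lemma rm_S_card_sub_one : ∑ x : ZMod p, x ^ (p - 1) = -1 := by
  have hp2 : 2 ≤ p := (Fact.out : p.Prime).two_le
  rw [rm_sum_pow _ (by omega), if_pos dvd_rfl]

/-- Sum of a monomial over all points factors as a product of power sums. -/
lemma rm_sum_prod_pow (m : ℕ) (e : Fin m → ℕ) :
    ∑ v : Fin m → ZMod p, ∏ i, v i ^ e i = ∏ i, ∑ x : ZMod p, x ^ e i := by
  classical
  rw [Finset.prod_univ_sum, Fintype.piFinset_univ]

/-- Pairing of a polynomial evaluation with a monomial evaluation. -/
lemma rm_pairing_monomial (m : ℕ) (f : MvPolynomial (Fin m) (ZMod p)) (b : Fin m →₀ ℕ) :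
    ∑ v : Fin m → ZMod p, eval v f * eval v (monomial b (1 : ZMod p))
      = ∑ c ∈ f.support, f.coeff c * ∏ i, ∑ x : ZMod p, x ^ (c i + b i) := by
  classical
  have key : ∀ v : Fin m → ZMod p, eval v f * eval v (monomial b (1 : ZMod p))
      = ∑ c ∈ f.support, f.coeff c * ∏ i, v i ^ (c i + b i) := by
    intro v
    rw [eval_eq', eval_monomial, one_mul, Finset.sum_mul]
    refine Finset.sum_congr rfl fun c _ => ?_
    rw [mul_assoc]
    congr 1
    rw [Finsupp.prod_fintype _ _ (fun i => pow_zero _), ← Finset.prod_mul_distrib]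
    exact Finset.prod_congr rfl fun i _ => (pow_add _ _ _).symm
  simp_rw [key]
  rw [Finset.sum_comm]
  refine Finset.sum_congr rfl fun c _ => ?_
  rw [← Finset.mul_sum, rm_sum_prod_pow]

/-- Every function has a reduced polynomial representative (all exponents `≤ p - 1`). -/
lemma rm_exists_reduced (m : ℕ) (g : (Fin m → ZMod p) → ZMod p) :
    ∃ f : MvPolynomial (Fin m) (ZMod p),
      (∀ c ∈ f.support, ∀ i, c i ≤ p - 1) ∧ ∀ v, eval v f = g v := by
  classical
  refine ⟨∑ w : Fin m → ZMod p, g w • indicator w, ?_, ?_⟩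
  · have hmem : (∑ w : Fin m → ZMod p, g w • indicator w)
        ∈ restrictDegree (Fin m) (ZMod p) (p - 1) := by
      have hc : Fintype.card (ZMod p) - 1 = p - 1 := by rw [ZMod.card]
      refine Submodule.sum_mem _ fun w _ => Submodule.smul_mem _ _ ?_
      have := indicator_mem_restrictDegree (K := ZMod p) w
      rwa [hc] at this
    exact (mem_restrictDegree (Fin m) _ (p - 1)).mp hmem
  · intro v
    rw [map_sum]
    rw [Finset.sum_eq_single v]
    · rw [smul_eq_C_mul, map_mul, eval_C, eval_indicator_apply_eq_one, mul_one]
    · intro w _ hw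
      rw [smul_eq_C_mul, map_mul, eval_C, eval_indicator_apply_eq_zero v w hw.symm, mul_zero]
    · intro h; exact absurd (Finset.mem_univ v) h

end Aux

/-- For `0 ≤ r ≤ m(p−1) − 1` and `r̃ = m(p−1) − r − 1`, the
orthogonal complement of `RM_p(r,m)` with respect to the bilinear form
`⟨g,h⟩ = ∑_{v ∈ 𝔽_p^m} g(v)h(v)` equals `RM_p(r̃,m)`. -/
theorem reedMuller_dual (p m r : ℕ) [Fact p.Prime] (hm : 1 ≤ m)
    (hr : r ≤ m * (p - 1) - 1) :
    {g : (Fin m → ZMod p) → ZMod p |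
        ∀ h ∈ reedMullerCode p m r, ∑ v : Fin m → ZMod p, g v * h v = 0}
      = reedMullerCode p m (m * (p - 1) - r - 1) := by
  classical
  have hp2 : 2 ≤ p := (Fact.out : p.Prime).two_le
  have hm1 : 1 ≤ m * (p - 1) := by
    calc 1 = 1 * 1 := by ring
    _ ≤ m * (p - 1) := Nat.mul_le_mul hm (by omega)
  ext g
  simp only [Set.mem_setOf_eq, reedMullerCode]
  constructor
  · -- dual ⊆ RM(r̃)
    intro hg
    obtain ⟨f, hred, heval⟩ := rm_exists_reduced m g
    refine ⟨f, ?_, funext fun v => (heval v).symm⟩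
    by_contra hdeg
    push_neg at hdeg
    have hne : f ≠ 0 := by
      intro h0
      rw [h0, totalDegree_zero] at hdeg
      omega
    obtain ⟨a, ha, had⟩ := Finset.exists_mem_eq_sup f.support
      (support_nonempty.mpr hne) (fun c : Fin m →₀ ℕ => c.sum fun _ e => e)
    have hsuma : (a.sum fun _ e => e) = ∑ i, a i :=
      Finsupp.sum_fintype _ _ (fun _ => rfl)
    have hda : f.totalDegree = ∑ i, a i := by
      rw [MvPolynomial.totalDegree, had, hsuma]
    have hai : ∀ i, a i ≤ p - 1 := hred a ha
    have hd_le : ∑ i, a i ≤ m * (p - 1) := by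
      calc ∑ i, a i ≤ ∑ _i : Fin m, (p - 1) := Finset.sum_le_sum fun i _ => hai i
      _ = m * (p - 1) := by rw [Finset.sum_const, Finset.card_univ, Fintype.card_fin,
        smul_eq_mul]
    have hd_gt : m * (p - 1) - r - 1 < ∑ i, a i := hda ▸ hdeg
    set b : Fin m →₀ ℕ := Finsupp.equivFunOnFinite.symm (fun i => p - 1 - a i) with hbdef
    have hb : ∀ i, b i = p - 1 - a i := fun i => rfl
    have hsumb : (b.sum fun _ e => e) = ∑ i, b i :=
      Finsupp.sum_fintype _ _ (fun _ => rfl)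
    have hsum_ab : ∑ i, b i + ∑ i, a i = m * (p - 1) := by
      rw [← Finset.sum_add_distrib]
      calc ∑ i, (b i + a i) = ∑ _i : Fin m, (p - 1) := by
            refine Finset.sum_congr rfl fun i _ => ?_
            have := hai i
            rw [hb i]; omega
      _ = m * (p - 1) := by rw [Finset.sum_const, Finset.card_univ, Fintype.card_fin,
        smul_eq_mul]
    have hdegb : (monomial b (1 : ZMod p)).totalDegree ≤ r := by
      rw [totalDegree_monomial _ (one_ne_zero), hsumb]
      omega
    have h0 := hg (fun v => eval v (monomial b (1 : ZMod p))) ⟨monomial b 1, hdegb, rfl⟩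
    simp only [← heval] at h0
    rw [rm_pairing_monomial] at h0
    have hSa : ∀ i : Fin m, ∑ x : ZMod p, x ^ (a i + b i) = -1 := by
      intro i
      have h1 : a i + b i = p - 1 := by
        have := hai i; rw [hb i]; omega
      rw [h1]; exact rm_S_card_sub_one
    have hkey : ∑ c ∈ f.support, f.coeff c * ∏ i, ∑ x : ZMod p, x ^ (c i + b i)
        = f.coeff a * (-1 : ZMod p) ^ m := by
      rw [Finset.sum_eq_single a]
      · congr 1
        calc ∏ i : Fin m, ∑ x : ZMod p, x ^ (a i + b i)
            = ∏ _i : Fin m, (-1 : ZMod p) := Finset.prod_congr rfl fun i _ => hSa i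
          _ = (-1 : ZMod p) ^ m := by simp
      · intro c hc hca
        by_contra hne0
        have hprod : ∀ i : Fin m, (∑ x : ZMod p, x ^ (c i + b i)) ≠ 0 := by
          intro i hi0
          exact hne0 (by rw [Finset.prod_eq_zero (Finset.mem_univ i) hi0, mul_zero])
        have hge : ∀ i, a i ≤ c i := by
          intro i
          obtain ⟨⟨t, ht⟩, hpos⟩ := rm_S_ne_zero (hprod i)
          have h1 := hai i
          have h2 := hred c hc i
          rw [hb i] at ht hpos
          have hub : (p - 1) * t ≤ (p - 1) * 2 := by omega
          have htpos : 0 < t := by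
            rcases Nat.eq_zero_or_pos t with rfl | h; · omega
            · exact h
          have ht2 : t ≤ 2 := Nat.le_of_mul_le_mul_left hub (by omega)
          interval_cases t <;> omega
        have hlt : ∑ i, a i < ∑ i, c i := by
          refine Finset.sum_lt_sum (fun i _ => hge i) ?_
          by_contra hcon
          push_neg at hcon
          exact hca (Finsupp.ext fun i => le_antisymm (hcon i (Finset.mem_univ i)) (hge i))
        have hcle : ∑ i, c i ≤ ∑ i, a i := by
          have h1 : (c.sum fun _ e => e) ≤ f.totalDegree := le_totalDegree hc
          have h2 : (c.sum fun _ e => e) = ∑ i, c i :=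
            Finsupp.sum_fintype _ _ (fun _ => rfl)
          omega
        omega
      · intro h; exact absurd ha h
    rw [hkey] at h0
    rcases mul_eq_zero.mp h0 with h | h
    · exact (mem_support_iff.mp ha) h
    · exact pow_ne_zero m (neg_ne_zero.mpr one_ne_zero) h
  · -- RM(r̃) ⊆ dual
    rintro ⟨f, hdeg, rfl⟩ h ⟨f', hdeg', rfl⟩
    have heq : ∀ v : Fin m → ZMod p, eval v f * eval v f' = eval v (f * f') :=
      fun v => (map_mul (eval v) f f').symm
    simp only [heq]
    apply MvPolynomial.sum_eval_eq_zero
    have h1 := totalDegree_mul f f'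
    have h2 : (Fintype.card (ZMod p) - 1) * Fintype.card (Fin m) = m * (p - 1) := by
      rw [ZMod.card, Fintype.card_fin, Nat.mul_comm]
    rw [h2]
    omega
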